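/- Let u : ℝ → ℝ be 5 times continuously differentiable (ContDiff ℝ 5) and fix x ∈ ℝ. Then the interpolation error h ↦ u(x + h/2) - ( -(1/8)·u(x-h) + (9/16)·u(x) + (9/16)·u(x+h) - (3h/64)·(u'(x-h) + 3·u'(x+h)) ) is O(h⁵) as h → 0 (IsBigO with respect to the filter 𝓝 0 of the function h ↦ h⁵), where u' denotes the derivative of u. -/

import Mathlib

open Asymptotics Filter

private lemma taylor_isBigO : ∀ (n : ℕ) (f : ℝ → ℝ), ContDiff ℝ n f → ∀ x : ℝ,
    (fun h : ℝ => f (x + h) -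
        ∑ k ∈ Finset.range n, iteratedDeriv k f x / (k.factorial : ℝ) * h ^ k)
      =O[nhds 0] fun h : ℝ => h ^ n := by
  intro n
  induction n with
  | zero =>
    intro f hf x
    simp only [Finset.range_zero, Finset.sum_empty, sub_zero, pow_zero]
    have h1 : Filter.Tendsto (fun h : ℝ => f (x + h)) (nhds 0) (nhds (f (x + 0))) := by
      exact (hf.continuous.tendsto _).comp (by
        exact (continuous_const.add continuous_id).tendsto 0)
    simpa using h1.isBigO_one ℝ
  | succ n ih =>
    intro f hf x
    have hf' : ContDiff ℝ n (deriv f) := by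
      have h2 : ContDiff ℝ ((n : WithTop ℕ∞) + 1) f := by exact_mod_cast hf
      exact (contDiff_succ_iff_deriv.mp h2).2.2
    have hfd : Differentiable ℝ f := by
      have h2 : ContDiff ℝ ((n : WithTop ℕ∞) + 1) f := by exact_mod_cast hf
      exact (contDiff_succ_iff_deriv.mp h2).1
    set g : ℝ → ℝ := fun h => f (x + h) -
        ∑ k ∈ Finset.range (n + 1), iteratedDeriv k f x / (k.factorial : ℝ) * h ^ k with hg
    set g' : ℝ → ℝ := fun h => deriv f (x + h) -
        ∑ k ∈ Finset.range n, iteratedDeriv k (deriv f) x / (k.factorial : ℝ) * h ^ k with hg'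
    have hg0 : g 0 = 0 := by
      simp [hg, Finset.sum_range_succ', iteratedDeriv_zero]
    have hder : ∀ h : ℝ, HasDerivAt g (g' h) h := by
      intro h
      have h1 : HasDerivAt (fun h : ℝ => f (x + h)) (deriv f (x + h)) h := by
        have h0 := ((hfd (x + h)).hasDerivAt).comp h ((hasDerivAt_id h).const_add x)
        rw [mul_one] at h0; exact h0
      have h2 : HasDerivAt
          (fun h : ℝ => ∑ k ∈ Finset.range (n + 1),
            iteratedDeriv k f x / (k.factorial : ℝ) * h ^ k)
          (∑ k ∈ Finset.range (n + 1),
            iteratedDeriv k f x / (k.factorial : ℝ) * (k * h ^ (k - 1))) h := by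
        exact HasDerivAt.fun_sum fun k _ => (hasDerivAt_pow k h).const_mul _
      have h3 : (∑ k ∈ Finset.range (n + 1),
            iteratedDeriv k f x / (k.factorial : ℝ) * (k * h ^ (k - 1)))
          = ∑ k ∈ Finset.range n, iteratedDeriv k (deriv f) x / (k.factorial : ℝ) * h ^ k := by
        rw [Finset.sum_range_succ']
        simp only [Nat.cast_zero, zero_mul, mul_zero, add_zero, pow_zero, Nat.cast_succ]
        refine Finset.sum_congr rfl fun k _ => ?_
        rw [← iteratedDeriv_succ']
        simp only [Nat.add_sub_cancel, Nat.factorial_succ, Nat.cast_mul]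
        have : ((k.factorial : ℝ)) ≠ 0 := by positivity
        field_simp
        push_cast; ring
      have h4 := h1.sub h2; rw [h3] at h4; exact h4
    obtain ⟨C, hC0, hCb⟩ := (ih (deriv f) hf' x).exists_pos
    rw [IsBigOWith, Metric.eventually_nhds_iff] at hCb
    obtain ⟨ε, hε, hb⟩ := hCb
    rw [isBigO_iff]
    refine ⟨C, Metric.eventually_nhds_iff.mpr ⟨ε, hε, fun h hh => ?_⟩⟩
    have habs : |h| < ε := by simpa [Real.dist_eq] using hh
    have key : ‖g h - g 0‖ ≤ C * |h| ^ n * ‖h - 0‖ := by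
      refine (convex_closedBall (0 : ℝ) |h|).norm_image_sub_le_of_norm_hasDerivWithin_le
        (f' := g') (fun t _ => (hder t).hasDerivWithinAt) (fun t ht => ?_) ?_ ?_
      · have ht' : |t| ≤ |h| := by simpa [Real.dist_eq] using ht
        have : ‖g' t‖ ≤ C * ‖t ^ n‖ := by
          apply hb; simpa [Real.dist_eq] using lt_of_le_of_lt ht' habs
        refine this.trans ?_
        have : ‖t ^ n‖ ≤ |h| ^ n := by
          rw [norm_pow]; exact pow_le_pow_left₀ (abs_nonneg t) ht' n
        nlinarith [norm_nonneg (t ^ n)]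
      · simp
      · simp [Metric.mem_closedBall, Real.dist_eq]
    rw [hg0, sub_zero, sub_zero] at key
    calc ‖g h‖ ≤ C * |h| ^ n * |h| := by simpa using key
      _ = C * ‖h ^ (n + 1)‖ := by rw [norm_pow, pow_succ, Real.norm_eq_abs]; ring

theorem hermite_full_stencil_value_fifth_order
    (u : ℝ → ℝ) (hu : ContDiff ℝ 5 u) (x : ℝ) :
    (fun h : ℝ =>
        u (x + h / 2) -
          (-(1/8) * u (x - h) + (9/16) * u x + (9/16) * u (x + h)
            - (3 * h / 64) * (deriv u (x - h) + 3 * deriv u (x + h))))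
      =O[nhds 0] fun h : ℝ => h ^ 5 := by
  have hu' : ContDiff ℝ 4 (deriv u) := by
    have h2 : ContDiff ℝ ((4 : ℕ∞) + 1) u := by exact_mod_cast hu
    exact_mod_cast (contDiff_succ_iff_deriv.mp (by exact_mod_cast h2)).2.2
  set R : ℝ → ℝ := fun t => u (x + t) -
      ∑ k ∈ Finset.range 5, iteratedDeriv k u x / (k.factorial : ℝ) * t ^ k with hRdef
  set S : ℝ → ℝ := fun t => deriv u (x + t) -
      ∑ k ∈ Finset.range 4, iteratedDeriv k (deriv u) x / (k.factorial : ℝ) * t ^ k with hSdef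
  have hR : R =O[nhds 0] fun t : ℝ => t ^ 5 := taylor_isBigO 5 u hu x
  have hS : S =O[nhds 0] fun t : ℝ => t ^ 4 := taylor_isBigO 4 (deriv u) hu' x
  have thalf : Filter.Tendsto (fun h : ℝ => h / 2) (nhds 0) (nhds 0) := by
    simpa using (continuous_id.div_const 2).tendsto (0 : ℝ)
  have tneg : Filter.Tendsto (fun h : ℝ => -h) (nhds 0) (nhds 0) := by
    simpa using continuous_neg.tendsto (0 : ℝ)
  have tid : Filter.Tendsto (fun h : ℝ => h) (nhds 0) (nhds 0) := tendsto_id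
  have o1 : (fun h : ℝ => R (h / 2)) =O[nhds 0] fun h : ℝ => h ^ 5 := by
    refine (hR.comp_tendsto thalf).trans ?_
    have : (fun h : ℝ => (h / 2) ^ 5) = fun h : ℝ => (1 / 32) * h ^ 5 := by
      funext h; ring
    rw [Function.comp_def, this]
    exact (isBigO_refl (fun h : ℝ => h ^ 5) _).const_mul_left _
  have o2 : (fun h : ℝ => R (-h)) =O[nhds 0] fun h : ℝ => h ^ 5 := by
    refine (hR.comp_tendsto tneg).trans ?_
    have : (fun h : ℝ => (-h) ^ 5) = fun h : ℝ => (-1) * h ^ 5 := by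
      funext h; ring
    rw [Function.comp_def, this]
    exact (isBigO_refl (fun h : ℝ => h ^ 5) _).const_mul_left _
  have o3 : (fun h : ℝ => R h) =O[nhds 0] fun h : ℝ => h ^ 5 := by
    simpa [Function.comp_def] using hR.comp_tendsto tid
  have o4 : (fun h : ℝ => h * S (-h)) =O[nhds 0] fun h : ℝ => h ^ 5 := by
    have := (isBigO_refl (fun h : ℝ => h) (nhds 0)).mul (hS.comp_tendsto tneg)
    refine this.trans ?_
    have : (fun h : ℝ => h * (fun t : ℝ => t ^ 4) (-h)) = fun h : ℝ => (1 : ℝ) * h ^ 5 := by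
      funext h; simp; ring
    rw [Function.comp_def]
    simp only [show ∀ h : ℝ, h * (-h) ^ 4 = h ^ 5 from fun h => by ring]
    exact isBigO_refl _ _
  have o5 : (fun h : ℝ => h * S h) =O[nhds 0] fun h : ℝ => h ^ 5 := by
    have := (isBigO_refl (fun h : ℝ => h) (nhds 0)).mul (hS.comp_tendsto tid)
    refine this.trans ?_
    rw [Function.comp_def]
    simp only [show ∀ h : ℝ, h * h ^ 4 = h ^ 5 from fun h => by ring]
    exact isBigO_refl _ _
  have combo : (fun h : ℝ => R (h / 2) + (1/8) * R (-h) - (9/16) * R h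
      + (3/64) * (h * S (-h)) + (9/64) * (h * S h)) =O[nhds 0] fun h : ℝ => h ^ 5 :=
    ((((o1.add (o2.const_mul_left _)).sub (o3.const_mul_left _)).add
      (o4.const_mul_left _)).add (o5.const_mul_left _))
  refine combo.congr (fun h => ?_) (fun _ => rfl)
  simp only [hRdef, hSdef, Finset.sum_range_succ, Finset.sum_range_zero,
    iteratedDeriv_zero, ← iteratedDeriv_succ', sub_eq_add_neg, neg_neg]
  norm_num [Nat.factorial]
  ring
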